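/- Let X₁, X₂, … be i.i.d. with distribution P having mean μ ∈ ℝ and variance σ² > 0. Let S_n = ∑_{i=1}^n X_i, V_n = ∑_{i=1}^n X_i², and for fixed c > 0 define G_n^{(c)} = √(c²/(n+c²))·((n+c²)V_n/((n+c²)V_n − S_n²))^{n/2}. Then (log G_n^{(c)})/n → (1/2)·log(1 + μ²/σ²) almost surely as n → ∞. -/

import Mathlib

open MeasureTheory ProbabilityTheory Filter

lemma aux_log_div_nat (c : ℝ) (hc : 0 < c) :
    Tendsto (fun n : ℕ => Real.log ((n : ℝ) + c ^ 2) / n) atTop (nhds 0) := by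
  have h := Real.tendsto_pow_log_div_mul_add_atTop 1 (-(c ^ 2)) 1 one_ne_zero
  have hn : Tendsto (fun n : ℕ => (n : ℝ) + c ^ 2) atTop atTop :=
    tendsto_atTop_add_const_right atTop _ tendsto_natCast_atTop_atTop
  have := h.comp hn
  simpa [Function.comp_def] using this

open Finset in
/-- E-power of the Gaussian-mixture scale-invariant t-test martingale: for i.i.d. data with
mean `μ` and variance `σ² > 0`, `(log G_n^{(c)})/n → (1/2) log(1+μ²/σ²)` a.s., where
`G_n^{(c)} = √(c²/(n+c²)) ((n+c²)V_n/((n+c²)V_n − S_n²))^{n/2}`. -/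
theorem stmt_18 {Ω : Type*} {mΩ : MeasurableSpace Ω} (Pr : Measure Ω) [IsProbabilityMeasure Pr]
    (P : Measure ℝ) [IsProbabilityMeasure P]
    (X : ℕ → Ω → ℝ) (hXm : ∀ i, Measurable (X i))
    (hiid : iIndepFun X Pr)
    (hlaw : ∀ i, Pr.map (X i) = P)
    (μ σ : ℝ) (hσ : 0 < σ)
    (hL2 : Integrable (fun x => x ^ 2) P)
    (hmean : ∫ x, x ∂P = μ) (hvar : ∫ x, (x - μ) ^ 2 ∂P = σ ^ 2)
    (c : ℝ) (hc : 0 < c) :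
    ∀ᵐ ω ∂Pr, Filter.Tendsto (fun n : ℕ =>
        Real.log (Real.sqrt (c ^ 2 / (n + c ^ 2)) *
          (((n + c ^ 2) * ∑ i ∈ Finset.range n, (X i ω) ^ 2) /
            ((n + c ^ 2) * (∑ i ∈ Finset.range n, (X i ω) ^ 2) -
              (∑ i ∈ Finset.range n, X i ω) ^ 2)) ^ ((n : ℝ) / 2)) / n)
      Filter.atTop (nhds ((1 / 2) * Real.log (1 + μ ^ 2 / σ ^ 2))) := by
  set M : ℝ := σ ^ 2 + μ ^ 2 with hMdef
  have hMpos : 0 < M := by positivity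
  have hσ2 : (0:ℝ) < σ ^ 2 := by positivity
  -- integrability of id under P
  have hid : Integrable (fun x : ℝ => x) P :=
    ((memLp_two_iff_integrable_sq aestronglyMeasurable_id).2 hL2).integrable one_le_two
  -- second moment
  have hMsq : ∫ x, x ^ 2 ∂P = M := by
    have h1 : ∫ x, (x - μ) ^ 2 ∂P = ∫ x, (x ^ 2 - (2 * μ) * x + μ ^ 2) ∂P := by
      congr 1; ext x; ring
    have hInt1 : Integrable (fun x : ℝ => x ^ 2 - (2 * μ) * x) P :=
      hL2.sub (hid.const_mul (2 * μ))
    have h2 : ∫ x, (x ^ 2 - (2 * μ) * x + μ ^ 2) ∂P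
        = (∫ x, x ^ 2 ∂P) - (2 * μ) * (∫ x, x ∂P) + μ ^ 2 := by
      rw [integral_add hInt1 (integrable_const _),
        integral_sub hL2 (hid.const_mul (2 * μ)), integral_const_mul, integral_const]
      simp
    rw [h1, h2, hmean] at hvar
    linarith
  -- SLLN for X
  have hX0int : Integrable (X 0) Pr := by
    have h : Integrable (fun x : ℝ => x) (Pr.map (X 0)) := by rw [hlaw]; exact hid
    exact (integrable_map_measure aestronglyMeasurable_id (hXm 0).aemeasurable).mp h
  have hEX : Pr[X 0] = μ := by
    have : ∫ ω, X 0 ω ∂Pr = ∫ x, x ∂(Pr.map (X 0)) :=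
      (integral_map (hXm 0).aemeasurable aestronglyMeasurable_id).symm
    rw [hlaw] at this
    rw [this, hmean]
  have hS := strong_law_ae_real X hX0int
    (fun i j hij => hiid.indepFun hij)
    (fun i => ⟨(hXm i).aemeasurable, (hXm 0).aemeasurable, by rw [hlaw, hlaw]⟩)
  rw [hEX] at hS
  -- SLLN for X²
  have hsqm : Measurable (fun x : ℝ => x ^ 2) := measurable_id.pow_const 2
  have hmap : ∀ i, Pr.map (fun ω => (X i ω) ^ 2) = P.map (fun x : ℝ => x ^ 2) := by
    intro i
    rw [← hlaw i, Measure.map_map hsqm (hXm i)]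
    rfl
  have hY0int : Integrable (fun ω => (X 0 ω) ^ 2) Pr := by
    have h : Integrable (fun x : ℝ => x ^ 2) (Pr.map (X 0)) := by rw [hlaw]; exact hL2
    exact (integrable_map_measure h.aestronglyMeasurable (hXm 0).aemeasurable).mp h
  have hEY : Pr[fun ω => (X 0 ω) ^ 2] = M := by
    have : ∫ ω, (X 0 ω) ^ 2 ∂Pr = ∫ x, x ^ 2 ∂(Pr.map (X 0)) :=
      (integral_map (hXm 0).aemeasurable hsqm.aestronglyMeasurable).symm
    rw [hlaw] at this
    rw [this, hMsq]
  have hV := strong_law_ae_real (fun i ω => (X i ω) ^ 2) hY0int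
    (fun i j hij => (hiid.indepFun hij).comp hsqm hsqm)
    (fun i => ⟨((hXm i).pow_const 2).aemeasurable, ((hXm 0).pow_const 2).aemeasurable,
      by rw [hmap, hmap]⟩)
  rw [hEY] at hV
  -- pointwise analysis
  filter_upwards [hS, hV] with ω ha hb
  set S : ℕ → ℝ := fun n => ∑ i ∈ Finset.range n, X i ω with hSdef
  set V : ℕ → ℝ := fun n => ∑ i ∈ Finset.range n, (X i ω) ^ 2 with hVdef
  set A : ℕ → ℝ := fun n => ((n : ℝ) + c ^ 2) * V n with hAdef
  set B : ℕ → ℝ := fun n => A n - (S n) ^ 2 with hBdef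
  have hq : Tendsto (fun n : ℕ => ((n : ℝ) + c ^ 2) / n) atTop (nhds 1) := by
    have h1 : Tendsto (fun n : ℕ => 1 + c ^ 2 / (n : ℝ)) atTop (nhds (1 + 0)) :=
      tendsto_const_nhds.add (tendsto_const_nhds.div_atTop tendsto_natCast_atTop_atTop)
    rw [add_zero] at h1
    apply h1.congr'
    filter_upwards [eventually_ge_atTop 1] with n hn
    have hn0 : (n : ℝ) ≠ 0 := Nat.cast_ne_zero.2 (by omega)
    field_simp
  have hA2 : Tendsto (fun n : ℕ => A n / (n : ℝ) ^ 2) atTop (nhds M) := by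
    have := hq.mul hb
    rw [one_mul] at this
    apply this.congr'
    filter_upwards [eventually_ge_atTop 1] with n hn
    simp only [hAdef, hVdef]
    rw [div_mul_div_comm, ← pow_two]
  have hB2 : Tendsto (fun n : ℕ => B n / (n : ℝ) ^ 2) atTop (nhds (σ ^ 2)) := by
    have := hA2.sub (ha.mul ha)
    have hlim : M - μ * μ = σ ^ 2 := by rw [hMdef]; ring
    rw [hlim] at this
    apply this.congr'
    filter_upwards [eventually_ge_atTop 1] with n hn
    simp only [hBdef, hAdef, hSdef, hVdef]
    rw [div_mul_div_comm, ← pow_two, ← pow_two, div_sub_div_same]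
  have hBpos : ∀ᶠ n : ℕ in atTop, 0 < B n := by
    filter_upwards [hB2.eventually (eventually_gt_nhds hσ2), eventually_ge_atTop 1] with n h1 hn
    have hn0 : (0:ℝ) < (n : ℝ) ^ 2 := by
      have : (0:ℝ) < (n : ℝ) := by exact_mod_cast Nat.pos_of_ne_zero (by omega)
      positivity
    have h2 : (0:ℝ) < (B n / (n:ℝ)^2) * (n:ℝ)^2 := mul_pos h1 hn0
    rwa [div_mul_cancel₀ _ (ne_of_gt hn0)] at h2
  have hApos : ∀ᶠ n : ℕ in atTop, 0 < A n := by
    filter_upwards [hA2.eventually (eventually_gt_nhds hMpos), eventually_ge_atTop 1] with n h1 hn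
    have hn0 : (0:ℝ) < (n : ℝ) ^ 2 := by
      have : (0:ℝ) < (n : ℝ) := by exact_mod_cast Nat.pos_of_ne_zero (by omega)
      positivity
    have h2 : (0:ℝ) < (A n / (n:ℝ)^2) * (n:ℝ)^2 := mul_pos h1 hn0
    rwa [div_mul_cancel₀ _ (ne_of_gt hn0)] at h2
  have hR : Tendsto (fun n : ℕ => A n / B n) atTop (nhds (M / σ ^ 2)) := by
    have := hA2.div hB2 (ne_of_gt hσ2)
    apply this.congr'
    filter_upwards [hBpos, eventually_ge_atTop 1] with n hB1 hn
    have hn0 : (n : ℝ) ≠ 0 := Nat.cast_ne_zero.2 (by omega)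
    simp only [Pi.div_apply]
    rw [div_div_div_cancel_right₀ (by positivity : ((n:ℝ)^2) ≠ 0)]
  have hratio_pos : (0:ℝ) < M / σ ^ 2 := div_pos hMpos hσ2
  have hlogR : Tendsto (fun n : ℕ => Real.log (A n / B n)) atTop
      (nhds (Real.log (M / σ ^ 2))) :=
    ((Real.continuousAt_log (ne_of_gt hratio_pos)).tendsto.comp hR)
  -- the prefactor term
  have hT : Tendsto (fun n : ℕ => Real.log (Real.sqrt (c ^ 2 / ((n : ℝ) + c ^ 2))) / n)
      atTop (nhds 0) := by
    have h1 : Tendsto (fun n : ℕ => Real.log (c ^ 2) / n) atTop (nhds 0) :=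
      tendsto_const_nhds.div_atTop tendsto_natCast_atTop_atTop
    have h2 := aux_log_div_nat c hc
    have h3 := (h1.sub h2).div_const 2
    rw [sub_zero, zero_div] at h3
    apply h3.congr'
    filter_upwards [eventually_ge_atTop 1] with n hn
    have hnc : (0:ℝ) < (n : ℝ) + c ^ 2 := by positivity
    rw [Real.log_sqrt (by positivity), Real.log_div (by positivity) (ne_of_gt hnc)]
    ring
  -- combine
  have key : Tendsto (fun n : ℕ =>
      Real.log (Real.sqrt (c ^ 2 / ((n : ℝ) + c ^ 2))) / n + (1 / 2) * Real.log (A n / B n))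
      atTop (nhds (0 + (1 / 2) * Real.log (M / σ ^ 2))) :=
    hT.add (tendsto_const_nhds.mul hlogR)
  have hMratio : M / σ ^ 2 = 1 + μ ^ 2 / σ ^ 2 := by
    field_simp [hMdef]
    exact hMdef
  rw [zero_add, hMratio] at key
  apply key.congr'
  filter_upwards [hApos, hBpos, eventually_ge_atTop 1] with n hA1 hB1 hn
  have hn0 : (0:ℝ) < (n : ℝ) := by exact_mod_cast Nat.pos_of_ne_zero (by omega)
  have hnc : (0:ℝ) < (n : ℝ) + c ^ 2 := by positivity
  have hs : (0:ℝ) < Real.sqrt (c ^ 2 / ((n : ℝ) + c ^ 2)) :=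
    Real.sqrt_pos.2 (by positivity)
  have hAB : (0:ℝ) < A n / B n := div_pos hA1 hB1
  have hrp : (0:ℝ) < (A n / B n) ^ ((n : ℝ) / 2) := Real.rpow_pos_of_pos hAB _
  simp only [hAdef, hBdef, hVdef, hSdef] at hAB hrp hs ⊢
  rw [Real.log_mul (ne_of_gt hs) (ne_of_gt hrp), Real.log_rpow hAB]
  field_simp
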